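/- arXiv:2407.10383 — 2 statements merged into one kernel-verified Lean document; each statement's English description precedes it below -/
import Mathlib

section
/- The conflation of n independent normal random variables with means μᵢ and variances σᵢ² > 0 has density equal to the normal density with mean (Σᵢ μᵢ/σᵢ²)/(Σᵢ σᵢ⁻²) and variance 1/(Σᵢ σᵢ⁻²). -/
open MeasureTheory

/-- Univariate Gaussian probability density with mean `μ` and standard deviation `σ`. -/
noncomputable def gaussianPDF (μ σ x : ℝ) : ℝ :=
  (1 / (σ * Real.sqrt (2 * Real.pi))) * Real.exp (-(x - μ) ^ 2 / (2 * σ ^ 2))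

theorem stmt_2 (n : ℕ) (hn : 1 ≤ n) (μ σ : Fin n → ℝ) (hσ : ∀ i, 0 < σ i) (x : ℝ) :
    (∏ i, gaussianPDF (μ i) (σ i) x) / (∫ y : ℝ, ∏ i, gaussianPDF (μ i) (σ i) y) =
      gaussianPDF ((∑ i, μ i / (σ i) ^ 2) / (∑ i, ((σ i) ^ 2)⁻¹))
        (Real.sqrt (1 / ∑ i, ((σ i) ^ 2)⁻¹)) x := by
  have hne : (Finset.univ : Finset (Fin n)).Nonempty := by
    haveI : NeZero n := ⟨by omega⟩
    exact Finset.univ_nonempty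
  set A := ∑ i, ((σ i) ^ 2)⁻¹ with hAdef
  set B := ∑ i, μ i / (σ i) ^ 2 with hBdef
  set D := ∑ i, (μ i) ^ 2 / (σ i) ^ 2 with hDdef
  have hA : 0 < A := Finset.sum_pos (fun i _ => by have := hσ i; positivity) hne
  set s := Real.sqrt (1 / A) with hsdef
  have hs : 0 < s := Real.sqrt_pos.mpr (by positivity)
  have hs2 : s ^ 2 = 1 / A := Real.sq_sqrt (by positivity)
  have hpi : (0 : ℝ) < Real.sqrt (2 * Real.pi) :=
    Real.sqrt_pos.mpr (by positivity)
  set K := (∏ i, 1 / (σ i * Real.sqrt (2 * Real.pi))) *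
      Real.exp (B ^ 2 / (2 * A) - D / 2) * (s * Real.sqrt (2 * Real.pi)) with hKdef
  have key : ∀ y : ℝ, (∏ i, gaussianPDF (μ i) (σ i) y) = K * gaussianPDF (B / A) s y := by
    intro y
    unfold gaussianPDF
    rw [Finset.prod_mul_distrib, ← Real.exp_sum]
    have hterm : ∀ i : Fin n, -(y - μ i) ^ 2 / (2 * (σ i) ^ 2)
        = (-(y ^ 2) / 2) * ((σ i) ^ 2)⁻¹ + y * (μ i / (σ i) ^ 2)
          - ((μ i) ^ 2 / (σ i) ^ 2) / 2 := by
      intro i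
      have := (hσ i).ne'
      field_simp
      ring
    have hsum : ∑ i, -(y - μ i) ^ 2 / (2 * (σ i) ^ 2)
        = (-(y ^ 2) / 2) * A + y * B - D / 2 := by
      rw [Finset.sum_congr rfl (fun i _ => hterm i), Finset.sum_sub_distrib,
        Finset.sum_add_distrib, ← Finset.mul_sum, ← Finset.mul_sum, ← Finset.sum_div]
    have hexp : -(y - B / A) ^ 2 / (2 * s ^ 2) =
        (-(y ^ 2) / 2) * A + y * B - D / 2 - (B ^ 2 / (2 * A) - D / 2) := by
      rw [hs2]
      field_simp
      ring
    rw [hsum, hKdef, hexp]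
    have hS : s * Real.sqrt (2 * Real.pi) ≠ 0 := by positivity
    have hgen : ∀ (P a b : ℝ),
        P * Real.exp a = P * Real.exp b * (s * Real.sqrt (2 * Real.pi)) *
          (1 / (s * Real.sqrt (2 * Real.pi)) * Real.exp (a - b)) := by
      intro P a b
      rw [Real.exp_sub]
      field_simp
    exact hgen _ _ _
  have hv : (0:ℝ) ≤ 1 / A := by positivity
  have hg : ∀ y : ℝ, gaussianPDF (B / A) s y
      = ProbabilityTheory.gaussianPDFReal (B / A) ⟨1 / A, hv⟩ y := by
    intro y
    unfold gaussianPDF ProbabilityTheory.gaussianPDFReal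
    rw [hs2]
    congr 1
    change 1 / (s * √(2 * Real.pi)) = (√(2 * Real.pi * (1 / A)))⁻¹
    rw [one_div, hsdef, Real.sqrt_mul (by positivity : (0:ℝ) ≤ 2 * Real.pi), mul_comm]
  have hK : 0 < K := by
    apply mul_pos (mul_pos ?_ (Real.exp_pos _)) (by positivity)
    exact Finset.prod_pos fun i _ => by have := hσ i; positivity
  have hvne : (⟨1 / A, hv⟩ : NNReal) ≠ 0 := by
    intro h
    have h2 := congrArg NNReal.toReal h
    change (1 / A : ℝ) = 0 at h2
    exact (by positivity : (0:ℝ) < 1 / A).ne' h2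
  have hint : (∫ y : ℝ, ∏ i, gaussianPDF (μ i) (σ i) y) = K := by
    simp_rw [key, hg]
    rw [integral_const_mul, ProbabilityTheory.integral_gaussianPDFReal_eq_one _ hvne, mul_one]
  rw [key x, hint, mul_div_cancel_left₀ _ hK.ne']
end

section
/- Let ψ : ℝ^d → ℝ^d be a diffeomorphism and Φ : ℝ^d → ℝ a continuously differentiable potential such that the system ż = −∇Φ(z) is globally asymptotically stable with equilibrium z_e. Then the natural gradient system ẋ = −G(x)⁻¹ ∇_x Φ(ψ(x)), with G(x) = J_ψ(x)ᵀ J_ψ(x) where J_ψ is the Jacobian of ψ, is globally asymptotically stable with equilibrium ψ⁻¹(z_e). Moreover, its trajectories are exactly the ψ-preimages of trajectories of the original system: if z(t) solves ż = −∇Φ(z) then x(t) = ψ⁻¹(z(t)) solves the natural gradient system. -/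
open Filter Matrix

/-- The gradient of `f : ℝ^d → ℝ` at `x`, in coordinates. -/
noncomputable def gradVec {d : ℕ} (f : (Fin d → ℝ) → ℝ) (x : Fin d → ℝ) : Fin d → ℝ :=
  fun i => fderiv ℝ f x (Pi.single i 1)

/-- The Jacobian matrix of `ψ : ℝ^d → ℝ^d` at `x`. -/
noncomputable def jacMat {d : ℕ} (ψ : (Fin d → ℝ) → (Fin d → ℝ)) (x : Fin d → ℝ) :
    Matrix (Fin d) (Fin d) ℝ :=
  Matrix.of fun i j => fderiv ℝ ψ x (Pi.single j 1) i

/-- The natural gradient vector field `x ↦ −G(x)⁻¹ ∇ₓ Φ(ψ(x))` with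
`G(x) = J_ψ(x)ᵀ J_ψ(x)`. -/
noncomputable def naturalGradField {d : ℕ} (ψ : (Fin d → ℝ) → (Fin d → ℝ))
    (Φ : (Fin d → ℝ) → ℝ) (x : Fin d → ℝ) : Fin d → ℝ :=
  -(((jacMat ψ x)ᵀ * jacMat ψ x)⁻¹.mulVec (gradVec (fun y => Φ (ψ y)) x))

/-- A continuous linear map on `ℝ^d` is determined by its values on the basis. -/
lemma clm_apply_eq_sum {d : ℕ} {M : Type*} [NormedAddCommGroup M] [NormedSpace ℝ M]
    (L : (Fin d → ℝ) →L[ℝ] M) (v : Fin d → ℝ) :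
    L v = ∑ j, v j • L (Pi.single j 1) := by
  conv_lhs => rw [← Finset.univ_sum_single v]
  rw [map_sum]
  refine Finset.sum_congr rfl fun j _ => ?_
  rw [← _root_.map_smul]
  congr 1
  ext i
  by_cases h : i = j <;> simp [h, Pi.single_apply]

/-- The Jacobian matrix acting on a vector is the Fréchet derivative applied to it. -/
lemma jacMat_mulVec {d : ℕ} (ψ : (Fin d → ℝ) → (Fin d → ℝ)) (x v : Fin d → ℝ) :
    (jacMat ψ x).mulVec v = fderiv ℝ ψ x v := by
  funext i
  rw [clm_apply_eq_sum (fderiv ℝ ψ x) v]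
  simp only [Matrix.mulVec, dotProduct, jacMat, Matrix.of_apply, Finset.sum_apply,
    Pi.smul_apply, smul_eq_mul]
  exact Finset.sum_congr rfl fun j _ => mul_comm _ _

/-- Chain rule for the gradient. -/
lemma gradVec_comp {d : ℕ} (ψ : (Fin d → ℝ) → (Fin d → ℝ)) (Φ : (Fin d → ℝ) → ℝ)
    (hψ : ContDiff ℝ 1 ψ) (hΦ : ContDiff ℝ 1 Φ) (x : Fin d → ℝ) :
    gradVec (fun y => Φ (ψ y)) x = (jacMat ψ x)ᵀ.mulVec (gradVec Φ (ψ x)) := by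
  funext i
  have hc : fderiv ℝ (fun y => Φ (ψ y)) x
      = (fderiv ℝ Φ (ψ x)).comp (fderiv ℝ ψ x) :=
    fderiv_comp x (hΦ.differentiable one_ne_zero _) (hψ.differentiable one_ne_zero _)
  rw [gradVec, hc]
  simp only [ContinuousLinearMap.comp_apply]
  rw [clm_apply_eq_sum (fderiv ℝ Φ (ψ x)) (fderiv ℝ ψ x (Pi.single i 1))]
  simp only [Matrix.mulVec, dotProduct, Matrix.transpose_apply, jacMat,
    Matrix.of_apply, gradVec, smul_eq_mul]

lemma jacMat_comp {d : ℕ} (f g : (Fin d → ℝ) → (Fin d → ℝ))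
    (hf : ContDiff ℝ 1 f) (hg : ContDiff ℝ 1 g) (x : Fin d → ℝ) :
    jacMat (fun y => f (g y)) x = jacMat f (g x) * jacMat g x := by
  ext i j
  have hc : fderiv ℝ (fun y => f (g y)) x
      = (fderiv ℝ f (g x)).comp (fderiv ℝ g x) :=
    fderiv_comp x (hf.differentiable one_ne_zero _) (hg.differentiable one_ne_zero _)
  have : (jacMat f (g x)).mulVec (fderiv ℝ g x (Pi.single j 1))
      = fderiv ℝ f (g x) (fderiv ℝ g x (Pi.single j 1)) := jacMat_mulVec _ _ _
  simp only [jacMat, Matrix.of_apply, hc, ContinuousLinearMap.comp_apply, Matrix.mul_apply,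
    ← this, Matrix.mulVec, dotProduct]

lemma jacMat_id {d : ℕ} (x : Fin d → ℝ) : jacMat (fun y => y) x = 1 := by
  ext i j
  have : fderiv ℝ (fun y : Fin d → ℝ => y) x = ContinuousLinearMap.id ℝ _ := fderiv_id'
  simp [jacMat, this, Matrix.one_apply, Pi.single_apply, eq_comm]

theorem stmt_12 {d : ℕ} (ψ ψinv : (Fin d → ℝ) → (Fin d → ℝ)) (Φ : (Fin d → ℝ) → ℝ)
    -- ψ is a diffeomorphism with inverse ψinv, and its Jacobian is everywhere invertible
    (hψ : ContDiff ℝ 1 ψ) (hψinv : ContDiff ℝ 1 ψinv)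
    (hleft : ∀ x, ψinv (ψ x) = x) (hright : ∀ z, ψ (ψinv z) = z)
    (hJ : ∀ x, IsUnit (jacMat ψ x).det)
    -- Φ is a C¹ potential
    (hΦ : ContDiff ℝ 1 Φ)
    -- the system ż = −∇Φ(z) is globally asymptotically stable with equilibrium z_e
    (ze : Fin d → ℝ) (heq : gradVec Φ ze = 0)
    (hGAS : ∀ z : ℝ → (Fin d → ℝ),
      (∀ t, HasDerivAt z (-(gradVec Φ (z t))) t) → Tendsto z atTop (nhds ze)) :
    -- ψ⁻¹(z_e) is an equilibrium of the natural gradient system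
    (naturalGradField ψ Φ (ψinv ze) = 0) ∧
    -- the natural gradient system is globally asymptotically stable with equilibrium ψ⁻¹(z_e)
    (∀ x : ℝ → (Fin d → ℝ),
      (∀ t, HasDerivAt x (naturalGradField ψ Φ (x t)) t) →
      Tendsto x atTop (nhds (ψinv ze))) ∧
    -- trajectories of the natural gradient system are ψ-preimages of trajectories of ż = −∇Φ(z)
    (∀ z : ℝ → (Fin d → ℝ),
      (∀ t, HasDerivAt z (-(gradVec Φ (z t))) t) →
      ∀ t, HasDerivAt (fun s => ψinv (z s)) (naturalGradField ψ Φ (ψinv (z t))) t) := by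
  have hψd := hψ.differentiable one_ne_zero
  have hψinvd := hψinv.differentiable one_ne_zero
  -- the field simplifies to -J⁻¹ ∇Φ(ψ x)
  have hfield : ∀ x, naturalGradField ψ Φ x
      = -((jacMat ψ x)⁻¹.mulVec (gradVec Φ (ψ x))) := by
    intro x
    have hJT : IsUnit (jacMat ψ x)ᵀ.det := by rw [Matrix.det_transpose]; exact hJ x
    rw [naturalGradField, gradVec_comp ψ Φ hψ hΦ, Matrix.mulVec_mulVec,
      Matrix.mul_inv_rev, Matrix.mul_assoc, Matrix.nonsing_inv_mul _ hJT, Matrix.mul_one]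
  -- the inverse Jacobian is the Jacobian of the inverse
  have hjinv : ∀ z, (jacMat ψ (ψinv z))⁻¹ = jacMat ψinv z := by
    intro z
    have h1 : jacMat ψ (ψinv z) * jacMat ψinv z = 1 := by
      rw [← jacMat_comp ψ ψinv hψ hψinv z]
      have : (fun y => ψ (ψinv y)) = fun y => y := funext hright
      rw [this, jacMat_id]
    exact Matrix.inv_eq_right_inv h1
  -- part 3
  have part3 : ∀ z : ℝ → (Fin d → ℝ),
      (∀ t, HasDerivAt z (-(gradVec Φ (z t))) t) →
      ∀ t, HasDerivAt (fun s => ψinv (z s)) (naturalGradField ψ Φ (ψinv (z t))) t := by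
    intro z hz t
    have hF : HasFDerivAt ψinv (fderiv ℝ ψinv (z t)) (z t) := (hψinvd (z t)).hasFDerivAt
    have := hF.comp_hasDerivAt t (hz t)
    have hval : fderiv ℝ ψinv (z t) (-(gradVec Φ (z t)))
        = naturalGradField ψ Φ (ψinv (z t)) := by
      rw [hfield, hjinv, map_neg, jacMat_mulVec, hright]
    rw [hval] at this
    exact this
  refine ⟨?_, ?_, part3⟩
  · rw [hfield, hright, heq, Matrix.mulVec_zero, neg_zero]
  · intro x hx
    set z : ℝ → Fin d → ℝ := fun t => ψ (x t) with hzdef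
    have hz : ∀ t, HasDerivAt z (-(gradVec Φ (z t))) t := by
      intro t
      have hF : HasFDerivAt ψ (fderiv ℝ ψ (x t)) (x t) := (hψd (x t)).hasFDerivAt
      have h := hF.comp_hasDerivAt t (hx t)
      have hval : fderiv ℝ ψ (x t) (naturalGradField ψ Φ (x t)) = -(gradVec Φ (z t)) := by
        rw [hfield, map_neg, ← jacMat_mulVec, Matrix.mulVec_mulVec,
          Matrix.mul_nonsing_inv _ (hJ (x t)), Matrix.one_mulVec, hzdef]
      rw [hval] at h
      exact h
    have hzt := hGAS z hz
    have hcont : Tendsto ψinv (nhds ze) (nhds (ψinv ze)) :=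
      (hψinv.continuous.tendsto ze)
    have : Tendsto (fun t => ψinv (z t)) atTop (nhds (ψinv ze)) := hcont.comp hzt
    have hxz : (fun t => ψinv (z t)) = x := by
      funext t; simp [hzdef, hleft]
    rwa [hxz] at this
end
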